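/- Local disjunction in the premisses: if every symbol of ψ occurs in Γ ∪ {φ} and every symbol of φ occurs in Γ ∪ {ψ}, and Γ ∪ {φ} is friendly to χ and Γ ∪ {ψ} is friendly to χ, then Γ ∪ {φ ∨ ψ} is friendly to χ. -/

import Mathlib

open FirstOrder Language

universe u v

/-- `Friendly ι Γ φ` : the theory `Γ` (in its own language `L₀ = L_Γ`, included in the
language `L = L_{Γ,φ}` via `ι`) is *friendly* to the sentence `φ` of `L`:
every model of `Γ` has an elementary extension which can be expanded to a model of `φ`. -/
def Friendly {L₀ L : FirstOrder.Language.{u, v}} (ι : L₀ →ᴸ L) (Γ : L₀.Theory)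
    (φ : L.Sentence) : Prop :=
  ∀ (M : Type (max u v)) [L₀.Structure M] [Nonempty M],
    M ⊨ Γ →
    ∃ (N : Type (max u v)) (S₀ : L₀.Structure N) (SL : L.Structure N),
      Nonempty (@ElementaryEmbedding L₀ M N _ S₀) ∧
      (@LHom.IsExpansionOn L₀ L ι N S₀ SL) ∧
      (@Sentence.Realize L N SL φ)

/-- Local disjunction in the premisses: if every symbol of `ψ` occurs in `Γ ∪ {φ}` and
every symbol of `φ` occurs in `Γ ∪ {ψ}` (so `φ` and `ψ` are sentences of the same
language `L₁ = L_{Γ,φ} = L_{Γ,ψ}`), and `Γ ∪ {φ}` and `Γ ∪ {ψ}` are both friendly to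
`χ`, then `Γ ∪ {φ ∨ ψ}` is friendly to `χ`. -/
theorem local_disjunction_in_premisses {L₀ L₁ L₂ : FirstOrder.Language.{u, v}}
    (ι : L₀ →ᴸ L₁) (ι' : L₁ →ᴸ L₂) (hι : ι.Injective) (hι' : ι'.Injective)
    (Γ : L₀.Theory) (φ ψ : L₁.Sentence) (χ : L₂.Sentence)
    (h₁ : Friendly ι' (ι.onTheory Γ ∪ {φ}) χ)
    (h₂ : Friendly ι' (ι.onTheory Γ ∪ {ψ}) χ) :
    Friendly ι' (ι.onTheory Γ ∪ {φ ⊔ ψ}) χ := by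
  intro M _ _ hM
  have hΓ : M ⊨ ι.onTheory Γ := Theory.Model.mono hM Set.subset_union_left
  have hd : M ⊨ (φ ⊔ ψ) := hM.realize_of_mem _ (Set.mem_union_right _ rfl)
  rcases BoundedFormula.realize_sup.1 hd with h | h
  · exact h₁ M (Theory.model_union_iff.2 ⟨hΓ, by simpa using (show M ⊨ φ from h)⟩)
  · exact h₂ M (Theory.model_union_iff.2 ⟨hΓ, by simpa using (show M ⊨ ψ from h)⟩)
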